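/- arXiv:2605.11415 — 2 statements merged into one kernel-verified Lean document; each statement's English description precedes it below -/
import Mathlib

section
/- Suppose an unmeasured variable U satisfies the Rosenbaum odds bound: Γ⁻¹ ≤ [pr(A=1|X,U=u)·pr(A=0|X,U=ũ)] / [pr(A=0|X,U=u)·pr(A=1|X,U=ũ)] ≤ Γ for all u, ũ. If r(x) = pr{Y(a) ≤ k | A = 1−a, X = x} and p(x) = pr{Y(a) ≤ k | A = a, X = x}, then r(x) ∈ [r⁻_Γ(p(x)), r⁺_Γ(p(x))] where r⁻_Γ(p) = p/(p+Γ(1−p)) and r⁺_Γ(p) = Γp/(Γp+1−p). As a simplified finite probability version: if W is a {0,1}-valued random variable, A a {0,1}-valued random variable, and U a random variable such that W ⟂ A | U and the conditional odds of A=1 given U=u vary by at most a factor Γ across u (all probabilities in (0,1)), then with p = P(W=1 | A=1), the counterfactual conditional probability P(W=1 | A=0) lies in [p/(p+Γ(1−p)), Γp/(Γp+1−p)]. -/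
open scoped Classical

/-- Probability of an event under a weight function on a finite sample space. -/
noncomputable def pr {Ω : Type*} [Fintype Ω] (P : Ω → ℝ) (E : Set Ω) : ℝ :=
  ∑ ω, if ω ∈ E then P ω else 0

/-- Conditional probability `P(E | B)`. -/
noncomputable def cpr {Ω : Type*} [Fintype Ω] (P : Ω → ℝ) (E B : Set Ω) : ℝ :=
  pr P (E ∩ B) / pr P B

lemma pr_nonneg {Ω : Type*} [Fintype Ω] (P : Ω → ℝ) (hP : ∀ ω, 0 ≤ P ω) (E : Set Ω) :
    0 ≤ pr P E := by
  apply Finset.sum_nonneg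
  intro ω _
  split <;> simp [hP ω]

lemma pr_congr {Ω : Type*} [Fintype Ω] (P : Ω → ℝ) {E F : Set Ω} (h : ∀ ω, ω ∈ E ↔ ω ∈ F) :
    pr P E = pr P F := by
  rw [Set.ext h]

lemma pr_mono {Ω : Type*} [Fintype Ω] (P : Ω → ℝ) (hP : ∀ ω, 0 ≤ P ω) {E F : Set Ω}
    (h : E ⊆ F) : pr P E ≤ pr P F := by
  apply Finset.sum_le_sum
  intro ω _
  by_cases hE : ω ∈ E
  · simp [hE, h hE]
  · simp only [hE, if_false]
    split <;> simp [hP ω]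

lemma pr_split {Ω : Type*} [Fintype Ω] (P : Ω → ℝ) (Q : Ω → Prop) (A : Ω → Bool) :
    pr P {ω | Q ω} = pr P {ω | Q ω ∧ A ω = true} + pr P {ω | Q ω ∧ A ω = false} := by
  unfold pr
  rw [← Finset.sum_add_distrib]
  apply Finset.sum_congr rfl
  intro ω _
  by_cases hQ : Q ω
  · cases hA : A ω <;> simp [hQ, hA]
  · simp [hQ]

lemma pr_partition {Ω S : Type*} [Fintype Ω] [Fintype S] (P : Ω → ℝ) (Q : Ω → Prop)
    (U : Ω → S) :
    pr P {ω | Q ω} = ∑ u, pr P {ω | Q ω ∧ U ω = u} := by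
  unfold pr
  rw [Finset.sum_comm]
  apply Finset.sum_congr rfl
  intro ω _
  by_cases hQ : Q ω <;> simp [hQ]

set_option maxHeartbeats 1000000 in
/-- Rosenbaum-type sensitivity bound (finite probability version).  If `W` and
`A` are conditionally independent given `U`, and the conditional odds of
`A = true` given `U = u` vary by at most a factor `Γ` across values of `u`,
then with `p = P(W = 1 | A = 1)`, the counterfactual conditional probability
`P(W = 1 | A = 0)` lies in `[p/(p + Γ(1−p)), Γp/(Γp + 1−p)]`. -/
theorem rosenbaum_counterfactual_bound {Ω S : Type*} [Fintype Ω] [Fintype S]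
    (P : Ω → ℝ) (hP : ∀ ω, 0 ≤ P ω) (hPsum : ∑ ω, P ω = 1)
    (A W : Ω → Bool) (U : Ω → S) (Γ : ℝ) (hΓ : 1 ≤ Γ)
    (hpos : ∀ u : S, 0 < pr P {ω | A ω = true ∧ U ω = u} ∧
      0 < pr P {ω | A ω = false ∧ U ω = u})
    (hCI : ∀ u : S,
      cpr P ({ω | W ω = true} ∩ {ω | A ω = true}) {ω | U ω = u}
        = cpr P {ω | W ω = true} {ω | U ω = u} *
          cpr P {ω | A ω = true} {ω | U ω = u})
    (hodds : ∀ u v : S,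
      Γ⁻¹ ≤ (cpr P {ω | A ω = true} {ω | U ω = u} /
              cpr P {ω | A ω = false} {ω | U ω = u}) *
            (cpr P {ω | A ω = false} {ω | U ω = v} /
              cpr P {ω | A ω = true} {ω | U ω = v}) ∧
      (cpr P {ω | A ω = true} {ω | U ω = u} /
              cpr P {ω | A ω = false} {ω | U ω = u}) *
            (cpr P {ω | A ω = false} {ω | U ω = v} /
              cpr P {ω | A ω = true} {ω | U ω = v}) ≤ Γ) :
    let p := cpr P {ω | W ω = true} {ω | A ω = true}
    cpr P {ω | W ω = true} {ω | A ω = false} ∈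
      Set.Icc (p / (p + Γ * (1 - p))) (Γ * p / (Γ * p + 1 - p)) := by
  intro p
  have hΓ0 : (0:ℝ) < Γ := lt_of_lt_of_le one_pos hΓ
  -- the sample space and S are nonempty
  have hΩne : Nonempty Ω := by
    by_contra h
    rw [not_nonempty_iff] at h
    rw [Finset.univ_eq_empty, Finset.sum_empty] at hPsum
    norm_num at hPsum
  have hSne : Nonempty S := ⟨U (Classical.arbitrary Ω)⟩
  -- stratum-level quantities
  set a : S → ℝ := fun u => pr P {ω | A ω = true ∧ U ω = u} with ha_def
  set b : S → ℝ := fun u => pr P {ω | A ω = false ∧ U ω = u} with hb_def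
  set q : S → ℝ := fun u => pr P {ω | U ω = u} with hq_def
  set m : S → ℝ := fun u => pr P {ω | W ω = true ∧ U ω = u} with hm_def
  set n : S → ℝ := fun u => pr P {ω | W ω = true ∧ A ω = true ∧ U ω = u} with hn_def
  set k : S → ℝ := fun u => pr P {ω | W ω = true ∧ A ω = false ∧ U ω = u} with hk_def
  have ha : ∀ u, 0 < a u := fun u => (hpos u).1
  have hb : ∀ u, 0 < b u := fun u => (hpos u).2
  have hqab : ∀ u, q u = a u + b u := by
    intro u
    have h := pr_split P (fun ω => U ω = u) A
    have e1 : {ω | U ω = u ∧ A ω = true} = {ω | A ω = true ∧ U ω = u} :=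
      Set.ext (fun ω => by simp only [Set.mem_setOf_eq]; tauto)
    have e2 : {ω | U ω = u ∧ A ω = false} = {ω | A ω = false ∧ U ω = u} :=
      Set.ext (fun ω => by simp only [Set.mem_setOf_eq]; tauto)
    rw [e1, e2] at h
    exact h
  have hq : ∀ u, 0 < q u := fun u => by rw [hqab u]; exact add_pos (ha u) (hb u)
  have hmnk : ∀ u, m u = n u + k u := by
    intro u
    have h := pr_split P (fun ω => W ω = true ∧ U ω = u) A
    have e1 : {ω | (W ω = true ∧ U ω = u) ∧ A ω = true}
        = {ω | W ω = true ∧ A ω = true ∧ U ω = u} :=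
      Set.ext (fun ω => by simp only [Set.mem_setOf_eq]; tauto)
    have e2 : {ω | (W ω = true ∧ U ω = u) ∧ A ω = false}
        = {ω | W ω = true ∧ A ω = false ∧ U ω = u} :=
      Set.ext (fun ω => by simp only [Set.mem_setOf_eq]; tauto)
    rw [e1, e2] at h
    exact h
  -- conditional independence in cleared form : n u * q u = m u * a u
  have hCI' : ∀ u, n u * q u = m u * a u := by
    intro u
    have h := hCI u
    unfold cpr at h
    have e1 : ({ω | W ω = true} ∩ {ω | A ω = true}) ∩ {ω | U ω = u}
        = {ω | W ω = true ∧ A ω = true ∧ U ω = u} :=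
      Set.ext (fun ω => by simp only [Set.mem_setOf_eq, Set.mem_inter_iff]; tauto)
    have e2 : {ω | W ω = true} ∩ {ω | U ω = u} = {ω | W ω = true ∧ U ω = u} :=
      Set.ext (fun ω => by simp only [Set.mem_setOf_eq, Set.mem_inter_iff])
    have e3 : {ω | A ω = true} ∩ {ω | U ω = u} = {ω | A ω = true ∧ U ω = u} :=
      Set.ext (fun ω => by simp only [Set.mem_setOf_eq, Set.mem_inter_iff])
    rw [e1, e2, e3] at h
    have hqu : q u ≠ 0 := (hq u).ne'
    field_simp at h
    have h2 : n u * (q u * q u) = m u * a u * q u := by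
      have hq' : pr P {ω | U ω = u} ≠ 0 := hqu
      rw [div_eq_div_iff hq' (pow_ne_zero 2 hq')] at h
      change n u * q u ^ 2 = m u * a u * q u at h
      linear_combination h
    exact mul_right_cancel₀ hqu (by linear_combination h2)
  have hm0 : ∀ u, 0 ≤ m u := fun u => pr_nonneg P hP _
  have hmq : ∀ u, m u ≤ q u := fun u => pr_mono P hP (by intro ω hω; exact hω.2)
  -- weights
  have hw : ∀ u, ∃ w : ℝ, 0 ≤ w ∧ w ≤ 1 ∧ n u = w * a u ∧ k u = w * b u := by
    intro u
    refine ⟨m u / q u, div_nonneg (hm0 u) (hq u).le, (div_le_one (hq u)).2 (hmq u), ?_, ?_⟩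
    · rw [div_mul_eq_mul_div, eq_div_iff (hq u).ne']
      linear_combination hCI' u
    · rw [div_mul_eq_mul_div, eq_div_iff (hq u).ne']
      have h1 := hCI' u
      have h2 := hmnk u
      have h3 := hqab u
      linear_combination (-1 : ℝ) * h1 - q u * h2 + m u * h3
  -- odds bound in cleared form
  have hodds' : ∀ u v, a u * b v ≤ Γ * (b u * a v) := by
    intro u v
    have h := (hodds u v).2
    unfold cpr at h
    have e1 : ∀ w : S, {ω | A ω = true} ∩ {ω | U ω = w} = {ω | A ω = true ∧ U ω = w} :=
      fun w => Set.ext (fun ω => by simp only [Set.mem_setOf_eq, Set.mem_inter_iff])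
    have e2 : ∀ w : S, {ω | A ω = false} ∩ {ω | U ω = w} = {ω | A ω = false ∧ U ω = w} :=
      fun w => Set.ext (fun ω => by simp only [Set.mem_setOf_eq, Set.mem_inter_iff])
    rw [e1 u, e2 u, e1 v, e2 v] at h
    have r1 : a u / q u / (b u / q u) = a u / b u := by
      rw [div_div_div_comm, div_self (hq u).ne', div_one]
    have r2 : b v / q v / (a v / q v) = b v / a v := by
      rw [div_div_div_comm, div_self (hq v).ne', div_one]
    rw [r1, r2, div_mul_div_comm, div_le_iff₀ (mul_pos (hb u) (ha v))] at h
    linarith [h]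
  -- totals
  set A1 : ℝ := ∑ u, a u with hA1_def
  set B1 : ℝ := ∑ u, b u with hB1_def
  set N1 : ℝ := ∑ u, n u with hN1_def
  set K1 : ℝ := ∑ u, k u with hK1_def
  have hA1 : 0 < A1 := Finset.sum_pos (fun u _ => ha u) Finset.univ_nonempty
  have hB1 : 0 < B1 := Finset.sum_pos (fun u _ => hb u) Finset.univ_nonempty
  have hn0 : ∀ u, 0 ≤ n u := fun u => pr_nonneg P hP _
  have hk0 : ∀ u, 0 ≤ k u := fun u => pr_nonneg P hP _
  have hna : ∀ u, n u ≤ a u := by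
    intro u
    obtain ⟨w, hw0, hw1, hn, hk⟩ := hw u
    rw [hn]
    nlinarith [ha u]
  have hkb : ∀ u, k u ≤ b u := by
    intro u
    obtain ⟨w, hw0, hw1, hn, hk⟩ := hw u
    rw [hk]
    nlinarith [hb u]
  have hN0 : 0 ≤ N1 := Finset.sum_nonneg fun u _ => hn0 u
  have hK0 : 0 ≤ K1 := Finset.sum_nonneg fun u _ => hk0 u
  have hNA : N1 ≤ A1 := Finset.sum_le_sum fun u _ => hna u
  have hKB : K1 ≤ B1 := Finset.sum_le_sum fun u _ => hkb u
  -- key termwise inequalities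
  have keyterm : ∀ u v, k u * (a v - n v) ≤ Γ * (n u * (b v - k v)) ∧
      n u * (b v - k v) ≤ Γ * (k u * (a v - n v)) := by
    intro u v
    obtain ⟨w1, hw10, hw11, hn1, hk1⟩ := hw u
    obtain ⟨w2, hw20, hw21, hn2, hk2⟩ := hw v
    rw [hn1, hk1, hn2, hk2]
    have hfac : 0 ≤ w1 * (1 - w2) := mul_nonneg hw10 (by linarith)
    constructor
    · have h := mul_le_mul_of_nonneg_left (hodds' v u) hfac
      nlinarith [h]
    · have h := mul_le_mul_of_nonneg_left (hodds' u v) hfac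
      nlinarith [h]
  -- key bilinear inequalities
  have I1 : K1 * (A1 - N1) ≤ Γ * (N1 * (B1 - K1)) := by
    have eA : A1 - N1 = ∑ v, (a v - n v) := by
      rw [Finset.sum_sub_distrib]
    have eB : B1 - K1 = ∑ v, (b v - k v) := by
      rw [Finset.sum_sub_distrib]
    have L : K1 * (A1 - N1) = ∑ u, ∑ v, k u * (a v - n v) := by
      rw [eA, hK1_def, Finset.sum_mul_sum]
    have R : Γ * (N1 * (B1 - K1)) = ∑ u, ∑ v, Γ * (n u * (b v - k v)) := by
      rw [eB, hN1_def, Finset.sum_mul_sum, Finset.mul_sum]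
      exact Finset.sum_congr rfl (fun u _ => by rw [Finset.mul_sum])
    rw [L, R]
    exact Finset.sum_le_sum fun u _ => Finset.sum_le_sum fun v _ => (keyterm u v).1
  have I2 : N1 * (B1 - K1) ≤ Γ * (K1 * (A1 - N1)) := by
    have eA : A1 - N1 = ∑ v, (a v - n v) := by
      rw [Finset.sum_sub_distrib]
    have eB : B1 - K1 = ∑ v, (b v - k v) := by
      rw [Finset.sum_sub_distrib]
    have L : N1 * (B1 - K1) = ∑ u, ∑ v, n u * (b v - k v) := by
      rw [eB, hN1_def, Finset.sum_mul_sum]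
    have R : Γ * (K1 * (A1 - N1)) = ∑ u, ∑ v, Γ * (k u * (a v - n v)) := by
      rw [eA, hK1_def, Finset.sum_mul_sum, Finset.mul_sum]
      exact Finset.sum_congr rfl (fun u _ => by rw [Finset.mul_sum])
    rw [L, R]
    exact Finset.sum_le_sum fun u _ => Finset.sum_le_sum fun v _ => (keyterm u v).2
  -- identify p and the target probability
  have eWA : {ω | W ω = true} ∩ {ω | A ω = true} = {ω | W ω = true ∧ A ω = true} :=
    Set.ext (fun ω => by simp only [Set.mem_setOf_eq, Set.mem_inter_iff])
  have eWA' : {ω | W ω = true} ∩ {ω | A ω = false} = {ω | W ω = true ∧ A ω = false} :=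
    Set.ext (fun ω => by simp only [Set.mem_setOf_eq, Set.mem_inter_iff])
  have hprA : pr P {ω | A ω = true} = A1 :=
    pr_partition P (fun ω => A ω = true) U
  have hprB : pr P {ω | A ω = false} = B1 :=
    pr_partition P (fun ω => A ω = false) U
  have hprN : pr P {ω | W ω = true ∧ A ω = true} = N1 := by
    rw [pr_partition P (fun ω => W ω = true ∧ A ω = true) U]
    apply Finset.sum_congr rfl
    intro u _
    apply pr_congr
    intro ω
    simp only [Set.mem_setOf_eq]
    tauto
  have hprK : pr P {ω | W ω = true ∧ A ω = false} = K1 := by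
    rw [pr_partition P (fun ω => W ω = true ∧ A ω = false) U]
    apply Finset.sum_congr rfl
    intro u _
    apply pr_congr
    intro ω
    simp only [Set.mem_setOf_eq]
    tauto
  have hp : p = N1 / A1 := by
    show cpr P {ω | W ω = true} {ω | A ω = true} = N1 / A1
    unfold cpr
    rw [eWA, hprN, hprA]
  have hr : cpr P {ω | W ω = true} {ω | A ω = false} = K1 / B1 := by
    unfold cpr
    rw [eWA', hprK, hprB]
  rw [hr, hp]
  -- final algebra
  have hd1 : 0 < N1 + Γ * (A1 - N1) := by
    have h1 : A1 - N1 ≤ Γ * (A1 - N1) := le_mul_of_one_le_left (by linarith) hΓ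
    linarith
  have hd2 : 0 < Γ * N1 + A1 - N1 := by
    have h1 : N1 ≤ Γ * N1 := le_mul_of_one_le_left hN0 hΓ
    linarith
  constructor
  · -- lower bound
    have hden : 0 < N1 / A1 + Γ * (1 - N1 / A1) := by
      have : N1 / A1 + Γ * (1 - N1 / A1) = (N1 + Γ * (A1 - N1)) / A1 := by
        field_simp
      rw [this]
      positivity
    have e : N1 / A1 / (N1 / A1 + Γ * (1 - N1 / A1)) = N1 / (N1 + Γ * (A1 - N1)) := by
      rw [div_eq_div_iff hden.ne' hd1.ne']
      field_simp
    rw [e, div_le_div_iff₀ hd1 hB1]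
    calc N1 * B1 = N1 * (B1 - K1) + N1 * K1 := by ring
      _ ≤ Γ * (K1 * (A1 - N1)) + N1 * K1 := by linarith [I2]
      _ = K1 * (N1 + Γ * (A1 - N1)) := by ring
  · -- upper bound
    have hden : 0 < Γ * (N1 / A1) + 1 - N1 / A1 := by
      have : Γ * (N1 / A1) + 1 - N1 / A1 = (Γ * N1 + A1 - N1) / A1 := by
        rw [sub_div, add_div, div_self hA1.ne', mul_div_assoc]
      rw [this]
      positivity
    have e : Γ * (N1 / A1) / (Γ * (N1 / A1) + 1 - N1 / A1)
        = Γ * N1 / (Γ * N1 + A1 - N1) := by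
      rw [div_eq_div_iff hden.ne' hd2.ne']
      field_simp
    rw [e, div_le_div_iff₀ hB1 hd2]
    calc K1 * (Γ * N1 + A1 - N1) = K1 * (A1 - N1) + Γ * (N1 * K1) := by ring
      _ ≤ Γ * (N1 * (B1 - K1)) + Γ * (N1 * K1) := by linarith [I1]
      _ = Γ * N1 * B1 := by ring
end

section
/- Monotonicity of the copula functional ψ in the margins: let C be a copula and ψ(F₁,F₀) = ∑_{k=0}^{L−1} [C(F₁(k),F₀(k−1)) − C(F₁(k−1),F₀(k−1))] with F_a(−1)=0, F_a(L−1)=1, F_a nondecreasing. If G₁ is another nondecreasing margin with G₁(−1)=0, G₁(L−1)=1 and G₁(k) ≥ F₁(k) for all k, then ψ(G₁,F₀) ≤ ψ(F₁,F₀). Similarly, if G₀(k) ≥ F₀(k) for all k, then ψ(F₁,G₀) ≥ ψ(F₁,F₀). -/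
/-- A (bivariate) copula on `[0,1]²`: grounded, uniform margins, 2-increasing. -/
def IsCopula (C : ℝ → ℝ → ℝ) : Prop :=
  (∀ u ∈ Set.Icc (0:ℝ) 1, C u 0 = 0) ∧
  (∀ v ∈ Set.Icc (0:ℝ) 1, C 0 v = 0) ∧
  (∀ u ∈ Set.Icc (0:ℝ) 1, C u 1 = u) ∧
  (∀ v ∈ Set.Icc (0:ℝ) 1, C 1 v = v) ∧
  (∀ u u' v v' : ℝ, 0 ≤ u → u ≤ u' → u' ≤ 1 → 0 ≤ v → v ≤ v' → v' ≤ 1 →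
    0 ≤ C u' v' - C u' v - C u v' + C u v)

/-- Monotonicity of `ψ(F₁,F₀) = ∑_{k=0}^{L−1} [C(F₁(k),F₀(k−1)) − C(F₁(k−1),F₀(k−1))]`
in the margins: raising the treated margin pointwise decreases `ψ`, and raising
the control margin pointwise increases `ψ`.  Indexing convention: `F a i`
represents `F_a(i − 1)`, so `F a 0 = F_a(−1) = 0` and `F a L = F_a(L−1) = 1`. -/
theorem psi_monotone_in_margins (C : ℝ → ℝ → ℝ) (hC : IsCopula C) (L : ℕ)
    (F1 F0 G1 G0 : ℕ → ℝ)
    (hF1mono : Monotone F1) (hF0mono : Monotone F0)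
    (hG1mono : Monotone G1) (hG0mono : Monotone G0)
    (hF1range : ∀ i, F1 i ∈ Set.Icc (0:ℝ) 1)
    (hF0range : ∀ i, F0 i ∈ Set.Icc (0:ℝ) 1)
    (hG1range : ∀ i, G1 i ∈ Set.Icc (0:ℝ) 1)
    (hG0range : ∀ i, G0 i ∈ Set.Icc (0:ℝ) 1)
    (hF10 : F1 0 = 0) (hF00 : F0 0 = 0) (hF1L : F1 L = 1) (hF0L : F0 L = 1)
    (hG10 : G1 0 = 0) (hG00 : G0 0 = 0) (hG1L : G1 L = 1) (hG0L : G0 L = 1) :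
    let ψ : (ℕ → ℝ) → (ℕ → ℝ) → ℝ := fun H1 H0 =>
      ∑ k ∈ Finset.range L, (C (H1 (k+1)) (H0 k) - C (H1 k) (H0 k))
    ((∀ i, F1 i ≤ G1 i) → ψ G1 F0 ≤ ψ F1 F0) ∧
    ((∀ i, F0 i ≤ G0 i) → ψ F1 F0 ≤ ψ F1 G0) := by
  obtain ⟨hg1, hg2, hm1, hm2, h2⟩ := hC
  intro ψ
  have hψ : ∀ H1 H0 : ℕ → ℝ, ψ H1 H0
      = ∑ k ∈ Finset.range L, (C (H1 (k+1)) (H0 k) - C (H1 k) (H0 k)) := fun _ _ => rfl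
  constructor
  · intro hle
    have key : ∀ H1 : ℕ → ℝ, (∀ i, H1 i ∈ Set.Icc (0:ℝ) 1) → H1 0 = 0 → H1 L = 1 →
        ψ H1 F0 = 1 - ∑ k ∈ Finset.range L,
          (C (H1 (k+1)) (F0 (k+1)) - C (H1 (k+1)) (F0 k)) := by
      intro H1 hr h0 hL
      have tele : ∑ k ∈ Finset.range L, (C (H1 (k+1)) (F0 (k+1)) - C (H1 k) (F0 k))
          = C (H1 L) (F0 L) - C (H1 0) (F0 0) :=
        Finset.sum_range_sub (fun k => C (H1 k) (F0 k)) L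
      have e1 : ψ H1 F0 + ∑ k ∈ Finset.range L,
            (C (H1 (k+1)) (F0 (k+1)) - C (H1 (k+1)) (F0 k))
          = ∑ k ∈ Finset.range L, (C (H1 (k+1)) (F0 (k+1)) - C (H1 k) (F0 k)) := by
        rw [hψ, ← Finset.sum_add_distrib]
        exact Finset.sum_congr rfl (fun k _ => by ring)
      have hC11 : C (H1 L) (F0 L) = 1 := by rw [hL, hF0L]; exact hm2 1 (by norm_num)
      have hC00 : C (H1 0) (F0 0) = 0 := by rw [h0, hF00]; exact hg1 0 (by norm_num)
      rw [hC11, hC00] at tele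
      linarith
    rw [key G1 hG1range hG10 hG1L, key F1 hF1range hF10 hF1L]
    have hsum : ∑ k ∈ Finset.range L, (C (F1 (k+1)) (F0 (k+1)) - C (F1 (k+1)) (F0 k))
        ≤ ∑ k ∈ Finset.range L, (C (G1 (k+1)) (F0 (k+1)) - C (G1 (k+1)) (F0 k)) := by
      apply Finset.sum_le_sum
      intro k _
      have := h2 (F1 (k+1)) (G1 (k+1)) (F0 k) (F0 (k+1)) (hF1range (k+1)).1
        (hle (k+1)) (hG1range (k+1)).2 (hF0range k).1
        (hF0mono (Nat.le_succ k)) (hF0range (k+1)).2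
      linarith
    linarith
  · intro hle
    rw [hψ, hψ]
    apply Finset.sum_le_sum
    intro k _
    have := h2 (F1 k) (F1 (k+1)) (F0 k) (G0 k) (hF1range k).1
      (hF1mono (Nat.le_succ k)) (hF1range (k+1)).2 (hF0range k).1
      (hle k) (hG0range k).2
    linarith
end
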